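/- arXiv:2102.04891 — 3 statements merged into one kernel-verified Lean document; each statement's English description precedes it below -/
import Mathlib

section
/- For every real x > 0, the Binet function satisfies 0 < μ(x) ≤ 1/(12x), where μ(x) = log Γ(x) − (x − 1/2)·log x + x − (1/2)·log(2π). -/
/-- The real Binet function. -/
noncomputable def binetMu (x : ℝ) : ℝ :=
  Real.log (Real.Gamma x) - (x - 1/2) * Real.log x + x - (1/2) * Real.log (2 * Real.pi)

open Real Filter Topology

lemma key1 {u : ℝ} (h0 : 0 < u) (h1 : u < 1) :
    2*u < Real.log (1+u) - Real.log (1-u) := by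
  have H : StrictMonoOn (fun u : ℝ => Real.log (1+u) - Real.log (1-u) - 2*u) (Set.Ico 0 1) := by
    apply strictMonoOn_of_deriv_pos (convex_Ico 0 1)
    · apply ContinuousOn.sub; apply ContinuousOn.sub
      · exact fun x hx => ((Real.continuousAt_log (by simp at hx; nlinarith)).comp
          (by fun_prop)).continuousWithinAt
      · exact fun x hx => ((Real.continuousAt_log (by simp at hx; nlinarith)).comp
          (by fun_prop)).continuousWithinAt
      · fun_prop
    · intro x hx
      rw [interior_Ico] at hx
      obtain ⟨hx0, hx1⟩ := hx
      have hd : HasDerivAt (fun u : ℝ => Real.log (1+u) - Real.log (1-u) - 2*u)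
          (1/(1+x) - (-1)/(1-x) - 2) x := by
        have d1 : HasDerivAt (fun u : ℝ => Real.log (1+u)) (1/(1+x)) x := by
          simpa using (((hasDerivAt_id x).const_add 1).log (by simp [id]; nlinarith))
        have d2 : HasDerivAt (fun u : ℝ => Real.log (1-u)) ((-1)/(1-x)) x := by
          simpa [sub_eq_add_neg] using (((hasDerivAt_id x).neg.const_add 1).log (by simp [id]; nlinarith))
        exact ((d1.sub d2).sub (((hasDerivAt_id x).const_mul 2))).congr_deriv (by ring)
      rw [hd.deriv]
      have : 0 < 1 - x := by linarith
      have : 0 < 1 + x := by linarith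
      rw [div_sub_div _ _ (by linarith) (by linarith)]
      rw [sub_pos, lt_div_iff₀ (by nlinarith)]
      nlinarith
  have := H (Set.left_mem_Ico.2 one_pos) (Set.mem_Ico.2 ⟨h0.le, h1⟩) h0
  simp at this
  linarith

lemma key2 {u : ℝ} (h0 : 0 < u) (h1 : u < 1) :
    Real.log (1+u) - Real.log (1-u) ≤ 2*u + 2*u^3/(3*(1-u^2)) := by
  have hder : ∀ x ∈ Set.Ioo (0:ℝ) 1,
      HasDerivAt (fun u : ℝ => 2*u + 2*u^3/(3*(1-u^2)) - (Real.log (1+u) - Real.log (1-u)))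
        (2 + (2*(3*x^2)*(3*(1-x^2)) - 2*x^3*(3*(-(2*x))))/(3*(1-x^2))^2
          - (1/(1+x) - (-1)/(1-x))) x := by
    intro x hx
    obtain ⟨hx0, hx1⟩ := hx
    have h1x : (0:ℝ) < 1 - x^2 := by nlinarith
    have d1 : HasDerivAt (fun u : ℝ => Real.log (1+u)) (1/(1+x)) x := by
      simpa using (((hasDerivAt_id x).const_add 1).log (by simp [id]; nlinarith))
    have d2 : HasDerivAt (fun u : ℝ => Real.log (1-u)) ((-1)/(1-x)) x := by
      simpa [sub_eq_add_neg] using (((hasDerivAt_id x).neg.const_add 1).log (by simp [id]; nlinarith))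
    have d3 : HasDerivAt (fun u : ℝ => 2*u^3) (2*(3*x^2)) x := by
      simpa using ((hasDerivAt_pow 3 x).const_mul 2)
    have d4 : HasDerivAt (fun u : ℝ => 3*(1-u^2)) (3*(-(2*x))) x := by
      have := ((hasDerivAt_pow 2 x).const_sub 1).const_mul 3
      exact this.congr_deriv (by norm_num)
    have d5 := (d3.div d4 (by positivity))
    have d6 := ((hasDerivAt_id x).const_mul 2).add d5
    have := d6.sub (d1.sub d2)
    exact this.congr_deriv (by ring)
  have H : MonotoneOn (fun u : ℝ => 2*u + 2*u^3/(3*(1-u^2)) - (Real.log (1+u) - Real.log (1-u)))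
      (Set.Ico 0 1) := by
    apply monotoneOn_of_deriv_nonneg (convex_Ico 0 1)
    · apply ContinuousOn.sub
      · apply ContinuousOn.add (by fun_prop)
        apply ContinuousOn.div (by fun_prop) (by fun_prop)
        intro x hx; simp at hx; nlinarith
      · apply ContinuousOn.sub
        · exact fun x hx => ((Real.continuousAt_log (by simp at hx; nlinarith)).comp
            (by fun_prop)).continuousWithinAt
        · exact fun x hx => ((Real.continuousAt_log (by simp at hx; nlinarith)).comp
            (by fun_prop)).continuousWithinAt
    · rw [interior_Ico]
      exact fun x hx => (hder x hx).differentiableAt.differentiableWithinAt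
    · rw [interior_Ico]
      intro x hx
      rw [(hder x hx).deriv]
      obtain ⟨hx0, hx1⟩ := hx
      have h1x : (0:ℝ) < 1 - x^2 := by nlinarith
      have hx1' : (0:ℝ) < 1 - x := by linarith
      have hx1'' : (0:ℝ) < 1 + x := by linarith
      rw [sub_nonneg, div_sub_div _ _ (by linarith) (by linarith), div_le_iff₀ (by nlinarith)]
      have e : (2 * (3 * x ^ 2) * (3 * (1 - x ^ 2)) - 2 * x ^ 3 * (3 * -(2 * x))) / (3 * (1 - x ^ 2)) ^ 2
          = (2*x^2*(3 - x^2))/(3*(1-x^2)^2) := by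
        rw [div_eq_div_iff (by positivity) (by positivity)]; ring
      rw [e]
      have hQ : 2*x^2/(1-x^2) ≤ 2 * x ^ 2 * (3 - x ^ 2) / (3 * (1 - x ^ 2) ^ 2) := by
        rw [div_le_div_iff₀ (by positivity) (by positivity)]
        nlinarith [pow_pos hx0 4]
      have h2 : 2*x^2/(1-x^2)*(1-x^2) = 2*x^2 := by field_simp
      nlinarith [mul_le_mul_of_nonneg_right hQ h1x.le, h2]
  have := H (Set.left_mem_Ico.2 one_pos) (Set.mem_Ico.2 ⟨h0.le, h1⟩) h0.le
  simp at this
  linarith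

noncomputable def binetG (y : ℝ) : ℝ := (y + 1/2) * (Real.log (y+1) - Real.log y) - 1

lemma logdiff_eq {y : ℝ} (hy : 0 < y) :
    Real.log (y+1) - Real.log y
      = Real.log (1 + 1/(2*y+1)) - Real.log (1 - 1/(2*y+1)) := by
  have h1 : (1 : ℝ) + 1/(2*y+1) = (2*(y+1))/(2*y+1) := by field_simp; ring
  have h2 : (1 : ℝ) - 1/(2*y+1) = (2*y)/(2*y+1) := by field_simp; ring
  rw [h1, h2, Real.log_div (by positivity) (by positivity),
    Real.log_div (by positivity) (by positivity),
    Real.log_mul (by norm_num) (by positivity), Real.log_mul (by norm_num) hy.ne']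
  ring

lemma binetG_pos {y : ℝ} (hy : 0 < y) : 0 < binetG y := by
  have hu0 : (0:ℝ) < 1/(2*y+1) := by positivity
  have hu1 : 1/(2*y+1) < 1 := by rw [div_lt_one (by linarith)]; linarith
  have := key1 hu0 hu1
  rw [binetG, logdiff_eq hy, sub_pos]
  calc (1:ℝ) = (y + 1/2) * (2 * (1/(2*y+1))) := by field_simp
    _ < _ := by apply mul_lt_mul_of_pos_left this (by linarith)

lemma binetG_le {y : ℝ} (hy : 0 < y) : binetG y ≤ 1/(12*y) - 1/(12*(y+1)) := by
  have hu0 : (0:ℝ) < 1/(2*y+1) := by positivity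
  have hu1 : 1/(2*y+1) < 1 := by rw [div_lt_one (by linarith)]; linarith
  have h := key2 hu0 hu1
  rw [binetG, logdiff_eq hy]
  have h2 : (y + 1/2) * (Real.log (1 + 1/(2*y+1)) - Real.log (1 - 1/(2*y+1)))
      ≤ (y + 1/2) * (2*(1/(2*y+1)) + 2*(1/(2*y+1))^3/(3*(1-(1/(2*y+1))^2))) :=
    mul_le_mul_of_nonneg_left h (by linarith)
  have h3 : (y + 1/2) * (2*(1/(2*y+1)) + 2*(1/(2*y+1))^3/(3*(1-(1/(2*y+1))^2)))
      = 1 + (1/(12*y) - 1/(12*(y+1))) := by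
    have hne : (2*y+1) ≠ 0 := by positivity
    have h4 : (1:ℝ) - (1/(2*y+1))^2 = (4*y^2+4*y)/(2*y+1)^2 := by field_simp; ring
    rw [h4]
    field_simp
    ring
  linarith

lemma binetMu_rec {x : ℝ} (hx : 0 < x) : binetMu x = binetG x + binetMu (x+1) := by
  have hG : Real.Gamma (x+1) = x * Real.Gamma x := Real.Gamma_add_one hx.ne'
  have hGpos : 0 < Real.Gamma x := Real.Gamma_pos_of_pos hx
  unfold binetMu binetG
  rw [hG, Real.log_mul hx.ne' hGpos.ne']
  ring

lemma binetMu_rec_n {x : ℝ} (hx : 0 < x) (N : ℕ) :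
    binetMu x = (∑ n ∈ Finset.range N, binetG (x + n)) + binetMu (x + N) := by
  induction N with
  | zero => simp
  | succ N ih =>
    rw [Finset.sum_range_succ, ih, binetMu_rec (x := x + N) (by positivity)]
    push_cast
    ring

-- ε m := log (stirlingSeq m) - log √π  tends to 0
lemma eps_tendsto :
    Tendsto (fun m : ℕ => Real.log (Stirling.stirlingSeq m) - Real.log (√π)) atTop (𝓝 0) := by
  have h := Stirling.tendsto_stirlingSeq_sqrt_pi
  have hc : ContinuousAt Real.log (√π) := Real.continuousAt_log (by positivity)
  have := (hc.tendsto.comp h).sub_const (Real.log (√π))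
  simpa using this

-- Stirling in log form
lemma log_factorial (m : ℕ) (hm : 1 ≤ m) :
    Real.log (Nat.factorial m) = ((m:ℝ) + 1/2) * Real.log m - m + (1/2) * Real.log (2*π)
      + (Real.log (Stirling.stirlingSeq m) - Real.log (√π)) := by
  have h := Stirling.log_stirlingSeq_formula m
  have hm0 : (0:ℝ) < m := by exact_mod_cast hm
  rw [Real.log_mul two_ne_zero hm0.ne', Real.log_div hm0.ne' (Real.exp_ne_zero 1),
    Real.log_exp] at h
  rw [Real.log_sqrt Real.pi_pos.le, Real.log_mul two_ne_zero Real.pi_ne_zero]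
  linarith [h]

-- (m + c) * log (1 + t/m) → t
lemma tendsto_aux (c t : ℝ) :
    Tendsto (fun m : ℕ => ((m:ℝ) + c) * Real.log (1 + t/(m:ℝ))) atTop (𝓝 t) := by
  have h1 : Tendsto (fun m : ℕ => (m:ℝ) * Real.log (1 + t/(m:ℝ))) atTop (𝓝 t) :=
    (Real.tendsto_mul_log_one_add_div_atTop t).comp tendsto_natCast_atTop_atTop
  have h2 : Tendsto (fun m : ℕ => Real.log (1 + t/(m:ℝ))) atTop (𝓝 0) := by
    have : Tendsto (fun m : ℕ => 1 + t/(m:ℝ)) atTop (𝓝 1) := by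
      simpa using tendsto_const_nhds.add (tendsto_const_div_atTop_nhds_zero_nat t)
    have := (Real.continuousAt_log one_ne_zero).tendsto.comp this
    simpa [Function.comp_def] using this
  have := h1.add ((h2.const_mul c))
  simpa [add_mul, mul_comm] using this

lemma binetMu_shift_bounds {t : ℝ} (ht0 : 0 < t) (ht1 : t ≤ 1) {m : ℕ} (hm : 1 ≤ m) :
    ((Real.log (Stirling.stirlingSeq m) - Real.log (√π)) + t
        - ((m:ℝ) + 1/2) * Real.log (1 + t/(m:ℝ))) ≤ binetMu (t + m)
    ∧ binetMu (t + m) ≤ ((Real.log (Stirling.stirlingSeq m) - Real.log (√π)) + t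
        - ((m:ℝ) + t - 1/2) * Real.log (1 + t/(m:ℝ))) := by
  obtain ⟨k, rfl⟩ : ∃ k, m = k + 1 := ⟨m - 1, (Nat.succ_pred_eq_of_pos hm).symm⟩
  set m : ℕ := k + 1 with hmdef
  have hm0 : (0:ℝ) < m := by positivity
  have hmt : (0:ℝ) < (m:ℝ) + t := by positivity
  set c : ℝ := (1/2) * Real.log (2*π) with hc
  set ε : ℝ := Real.log (Stirling.stirlingSeq m) - Real.log (√π) with he
  -- log of factorials
  have e1 : Real.log (Nat.factorial m) = ((m:ℝ) + 1/2) * Real.log m - m + c + ε :=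
    log_factorial m hm
  have e2 : Real.log (Nat.factorial k) = Real.log (Nat.factorial m) - Real.log m := by
    have : (Nat.factorial m : ℝ) = (m:ℝ) * (Nat.factorial k : ℝ) := by
      rw [hmdef]; push_cast [Nat.factorial_succ]; ring
    rw [this, Real.log_mul hm0.ne' (by positivity)]
    ring
  have e3 : Real.log ((m:ℝ) + t) = Real.log m + Real.log (1 + t/(m:ℝ)) := by
    rw [show (1:ℝ) + t/(m:ℝ) = ((m:ℝ)+t)/m by field_simp, Real.log_div hmt.ne' hm0.ne']
    ring
  -- Gamma values at integers
  have hΓm : Real.Gamma m = Nat.factorial k := by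
    rw [hmdef]; push_cast; exact Real.Gamma_nat_eq_factorial k
  have hΓm1 : Real.Gamma ((m:ℝ) + 1) = Nat.factorial m := by
    exact_mod_cast Real.Gamma_nat_eq_factorial m
  have hconv := Real.convexOn_log_Gamma.2
  -- upper bound via convexity
  have hup : Real.log (Real.Gamma (t + m)) ≤
      (1-t) * Real.log (Nat.factorial k) + t * Real.log (Nat.factorial m) := by
    have h := hconv (Set.mem_Ioi.2 hm0) (Set.mem_Ioi.2 (by linarith : (0:ℝ) < (m:ℝ)+1))
      (by linarith : (0:ℝ) ≤ 1-t) ht0.le (by ring)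
    simp only [smul_eq_mul, Function.comp_apply] at h
    rw [show (1-t) * (m:ℝ) + t * ((m:ℝ)+1) = t + m by ring, hΓm, hΓm1] at h
    linarith
  -- lower bound via convexity
  have hlow : Real.log (Nat.factorial m) ≤
      Real.log (Real.Gamma (t + m)) + (1-t) * Real.log (t + (m:ℝ)) := by
    have h := hconv (Set.mem_Ioi.2 hmt) (Set.mem_Ioi.2 (by linarith : (0:ℝ) < (m:ℝ)+1+t))
      ht0.le (by linarith : (0:ℝ) ≤ 1-t) (by ring)
    simp only [smul_eq_mul, Function.comp_apply] at h
    rw [show t * ((m:ℝ)+t) + (1-t) * ((m:ℝ)+1+t) = (m:ℝ)+1 by ring, hΓm1] at h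
    have hΓa : Real.Gamma ((m:ℝ) + t + 1) = ((m:ℝ)+t) * Real.Gamma ((m:ℝ)+t) :=
      Real.Gamma_add_one hmt.ne'
    rw [show (m:ℝ)+1+t = (m:ℝ)+t+1 by ring, hΓa,
      Real.log_mul hmt.ne' (Real.Gamma_pos_of_pos hmt).ne',
      show (m:ℝ)+t = t+(m:ℝ) by ring] at h
    have hr : t * Real.log (Real.Gamma (t+(m:ℝ))) + (1-t) * (Real.log (t+(m:ℝ)) + Real.log (Real.Gamma (t+(m:ℝ))))
        = Real.log (Real.Gamma (t+(m:ℝ))) + (1-t) * Real.log (t+(m:ℝ)) := by ring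
    linarith [h]
  constructor
  · -- lower bound for binetMu
    unfold binetMu
    have key : Real.log (Real.Gamma (t+(m:ℝ))) ≥ Real.log (Nat.factorial m)
        - (1-t) * Real.log (t+(m:ℝ)) := by
      linarith
    have e4 : Real.log (Nat.factorial m) - (1-t) * Real.log (t+(m:ℝ))
        - (t + (m:ℝ) - 1/2) * Real.log (t + (m:ℝ)) + (t + m) - c
        = ε + t - ((m:ℝ) + 1/2) * Real.log (1 + t/(m:ℝ)) := by
      rw [show Real.log (t + (m:ℝ)) = Real.log ((m:ℝ) + t) by rw [add_comm], e3, e1]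
      ring
    linarith [key]
  · unfold binetMu
    have e5 : (1-t) * Real.log (Nat.factorial k) + t * Real.log (Nat.factorial m)
        - (t + (m:ℝ) - 1/2) * Real.log (t + (m:ℝ)) + (t + m) - c
        = ε + t - ((m:ℝ) + t - 1/2) * Real.log (1 + t/(m:ℝ)) := by
      rw [e2, show Real.log (t + (m:ℝ)) = Real.log ((m:ℝ) + t) by rw [add_comm], e3, e1]
      ring
    linarith [hup]

lemma tendsto_binetMu_shift {t : ℝ} (ht0 : 0 < t) (ht1 : t ≤ 1) :
    Tendsto (fun m : ℕ => binetMu (t + m)) atTop (𝓝 0) := by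
  have hA : Tendsto (fun m : ℕ => (Real.log (Stirling.stirlingSeq m) - Real.log (√π)) + t
      - ((m:ℝ) + 1/2) * Real.log (1 + t/(m:ℝ))) atTop (𝓝 0) := by
    have := (eps_tendsto.add (tendsto_const_nhds : Tendsto (fun _ : ℕ => t) atTop (𝓝 t))).sub
      (tendsto_aux (1/2) t)
    simpa using this
  have hB : Tendsto (fun m : ℕ => (Real.log (Stirling.stirlingSeq m) - Real.log (√π)) + t
      - ((m:ℝ) + t - 1/2) * Real.log (1 + t/(m:ℝ))) atTop (𝓝 0) := by
    have h2 : Tendsto (fun m : ℕ => ((m:ℝ) + (t - 1/2)) * Real.log (1 + t/(m:ℝ))) atTop (𝓝 t) :=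
      tendsto_aux (t - 1/2) t
    have := (eps_tendsto.add (tendsto_const_nhds : Tendsto (fun _ : ℕ => t) atTop (𝓝 t))).sub h2
    rw [show (0:ℝ) + t - t = 0 by ring] at this
    refine this.congr (fun m => by ring)
  refine tendsto_of_tendsto_of_tendsto_of_le_of_le' hA hB ?_ ?_
  · exact Filter.eventually_atTop.2 ⟨1, fun m hm => (binetMu_shift_bounds ht0 ht1 hm).1⟩
  · exact Filter.eventually_atTop.2 ⟨1, fun m hm => (binetMu_shift_bounds ht0 ht1 hm).2⟩

lemma tendsto_binetMu_add_nat {x : ℝ} (hx : 0 < x) :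
    Tendsto (fun N : ℕ => binetMu (x + N)) atTop (𝓝 0) := by
  set k : ℕ := (⌈x⌉ - 1).toNat with hk
  set t : ℝ := x - k with ht
  have hceil : (⌈x⌉ : ℝ) ≥ 1 := by exact_mod_cast Int.ceil_pos.2 hx
  have hkx : (k : ℝ) = (⌈x⌉ : ℝ) - 1 := by
    have h0 : (0:ℤ) ≤ ⌈x⌉ - 1 := by
      have : (1:ℤ) ≤ ⌈x⌉ := Int.ceil_pos.2 hx
      omega
    have h2 : ((⌈x⌉ - 1).toNat : ℤ) = ⌈x⌉ - 1 := Int.toNat_of_nonneg h0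
    calc (k:ℝ) = (((k:ℕ):ℤ):ℝ) := by norm_cast
      _ = ((⌈x⌉ - 1 : ℤ) : ℝ) := by rw [hk, h2]
      _ = (⌈x⌉ : ℝ) - 1 := by push_cast; ring
  have ht0 : 0 < t := by
    rw [ht, hkx]
    have := Int.ceil_lt_add_one x
    linarith
  have ht1 : t ≤ 1 := by
    rw [ht, hkx]
    have := Int.le_ceil x
    linarith
  have h := (tendsto_binetMu_shift ht0 ht1).comp (tendsto_add_atTop_nat k)
  refine h.congr (fun N => ?_)
  simp only [Function.comp_apply]
  push_cast
  congr 1; rw [ht]; ring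

theorem binetMu_pos_and_le (x : ℝ) (hx : 0 < x) :
    0 < binetMu x ∧ binetMu x ≤ 1 / (12 * x) := by
  have hS : Tendsto (fun N : ℕ => ∑ n ∈ Finset.range N, binetG (x + n)) atTop (𝓝 (binetMu x)) := by
    have h := (tendsto_binetMu_add_nat hx).const_sub (binetMu x)
    simp only [sub_zero] at h
    refine h.congr (fun N => ?_)
    rw [binetMu_rec_n hx N]
    ring
  constructor
  · have hge : binetMu x ≥ binetG x := by
      refine ge_of_tendsto hS ?_
      refine Filter.eventually_atTop.2 ⟨1, fun N hN => ?_⟩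
      calc binetG x = ∑ n ∈ Finset.range 1, binetG (x + n) := by simp
        _ ≤ _ := by
          refine Finset.sum_le_sum_of_subset_of_nonneg
            (Finset.range_subset_range.2 hN) (fun n _ _ => (binetG_pos (by positivity)).le)
    exact lt_of_lt_of_le (binetG_pos hx) hge
  · refine le_of_tendsto hS ?_
    refine Filter.Eventually.of_forall (fun N => ?_)
    calc ∑ n ∈ Finset.range N, binetG (x + n)
        ≤ ∑ n ∈ Finset.range N, (1/(12*(x+n)) - 1/(12*(x+n+1))) := by
          refine Finset.sum_le_sum (fun n _ => ?_)
          exact binetG_le (by positivity)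
      _ = 1/(12*(x+(0:ℕ))) - 1/(12*(x+N)) := by
          rw [← Finset.sum_range_sub' (fun n : ℕ => 1/(12*(x+(n:ℕ))))]
          refine Finset.sum_congr rfl (fun n _ => ?_)
          push_cast
          ring_nf
      _ ≤ 1/(12*x) := by
          simp only [Nat.cast_zero, add_zero]
          have : 0 ≤ 1/(12*(x+N)) := by positivity
          linarith
end

section
/- For every complex z not on the nonpositive real axis, ∫_z^{z+1} log Γ(t) dt = z·log z − z + (1/2)·log(2π), equivalently ∫_z^{z+1} μ(t) dt = (1/2)·(z(z+1)·log(z/(z+1)) + z + 1/2) where μ is the Binet function; in particular for real z > 0. -/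
open Real intervalIntegral MeasureTheory

/-- `log ∘ Γ` is continuous at positive points. -/
lemma contAt_logGamma {x : ℝ} (hx : 0 < x) :
    ContinuousAt (fun t : ℝ => Real.log (Real.Gamma t)) x := by
  have h1 : ContinuousAt Real.Gamma x :=
    (Real.differentiableAt_Gamma (fun m => by
      have : (0:ℝ) ≤ m := Nat.cast_nonneg m
      intro h; rw [h] at hx; linarith)).continuousAt
  exact (Real.continuousAt_log (Real.Gamma_pos_of_pos hx).ne').comp h1

lemma intInt_logGamma {a b : ℝ} (ha : 0 < a) (hb : 0 < b) :
    IntervalIntegrable (fun t : ℝ => Real.log (Real.Gamma t)) volume a b := by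
  apply ContinuousOn.intervalIntegrable
  intro x hx
  have hx0 : 0 < x := lt_of_lt_of_le (lt_min ha hb) hx.1
  exact (contAt_logGamma hx0).continuousWithinAt

/-- Derivative of `z ↦ ∫_z^{z+1} log Γ`. -/
lemma hasDerivAt_F {z : ℝ} (hz : 0 < z) :
    HasDerivAt (fun z : ℝ => ∫ t in z..(z + 1), Real.log (Real.Gamma t))
      (Real.log z) z := by
  set f : ℝ → ℝ := fun t => Real.log (Real.Gamma t) with hf
  have hsm : ∀ x : ℝ, 0 < x → StronglyMeasurableAtFilter f (nhds x) := by
    intro x hx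
    exact ⟨Set.Ioi 0, Ioi_mem_nhds hx,
      (continuousOn_of_forall_continuousAt fun y hy => contAt_logGamma hy).aestronglyMeasurable
        measurableSet_Ioi⟩
  have hd1 : HasDerivAt (fun u : ℝ => ∫ t in (1:ℝ)..u, f t) (f z) z :=
    intervalIntegral.integral_hasDerivAt_right (intInt_logGamma one_pos hz)
      (hsm z hz) (contAt_logGamma hz)
  have hd2' : HasDerivAt (fun u : ℝ => ∫ t in (1:ℝ)..u, f t) (f (z + 1)) (z + 1) :=
    intervalIntegral.integral_hasDerivAt_right (intInt_logGamma one_pos (by linarith))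
      (hsm (z + 1) (by linarith)) (contAt_logGamma (by linarith))
  have hd2 : HasDerivAt (fun u : ℝ => ∫ t in (1:ℝ)..(u + 1), f t) (f (z + 1)) z := by
    have := hd2'.comp z ((hasDerivAt_id z).add_const 1)
    simpa [Function.comp_def] using this
  have key : HasDerivAt (fun u : ℝ => (∫ t in (1:ℝ)..(u + 1), f t) - ∫ t in (1:ℝ)..u, f t)
      (f (z + 1) - f z) z := hd2.sub hd1
  have heq : (fun u : ℝ => ∫ t in u..(u + 1), f t) =ᶠ[nhds z]
      (fun u : ℝ => (∫ t in (1:ℝ)..(u + 1), f t) - ∫ t in (1:ℝ)..u, f t) := by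
    filter_upwards [Ioi_mem_nhds hz] with u hu
    have h1 : (∫ t in (1:ℝ)..u, f t) + (∫ t in u..(u + 1), f t) = ∫ t in (1:ℝ)..(u + 1), f t :=
      intervalIntegral.integral_add_adjacent_intervals (intInt_logGamma one_pos hu)
        (intInt_logGamma hu (by simp only [Set.mem_Ioi] at hu; linarith))
    linarith
  have hval : f (z + 1) - f z = Real.log z := by
    rw [hf]
    simp only
    rw [Real.Gamma_add_one hz.ne', Real.log_mul hz.ne' (Real.Gamma_pos_of_pos hz).ne']
    ring
  rw [← hval]
  exact key.congr_of_eventuallyEq heq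

/-- The first Raabe formula up to an unknown constant. -/
lemma F_eq_const {z : ℝ} (hz : 0 < z) :
    (∫ t in z..(z + 1), Real.log (Real.Gamma t)) - (z * Real.log z - z) =
      (∫ t in (1:ℝ)..2, Real.log (Real.Gamma t)) + 1 := by
  set G : ℝ → ℝ := fun u =>
    (∫ t in u..(u + 1), Real.log (Real.Gamma t)) - (u * Real.log u - u) with hG
  have hderiv : ∀ u ∈ Set.Ioi (0:ℝ), HasDerivAt G 0 u := by
    intro u hu
    have hu0 : (0:ℝ) < u := hu
    have h1 : HasDerivAt (fun x : ℝ => x * Real.log x - x) (Real.log u) u := by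
      have := (Real.hasDerivAt_mul_log hu0.ne').fun_sub (hasDerivAt_id u)
      simpa using this
    have := (hasDerivAt_F hu0).fun_sub h1
    simpa using this
  -- G is constant on Ioi 0
  have hconst : ∀ a b : ℝ, 0 < a → a ≤ b → G a = G b := by
    intro a b ha hab
    have hcont : ContinuousOn G (Set.Icc a b) := fun x hx =>
      ((hderiv x (lt_of_lt_of_le ha hx.1)).continuousAt).continuousWithinAt
    have := constant_of_has_deriv_right_zero hcont (fun x hx => by
      exact (hderiv x (lt_of_lt_of_le ha hx.1)).hasDerivWithinAt)
    exact (this b (Set.right_mem_Icc.2 hab)).symm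
  have h1 : G z = G (max z 1) := by
    rcases le_total z 1 with h | h
    · exact hconst z (max z 1) hz (le_max_left _ _)
    · simp [max_eq_left h]
  have h2 : G 1 = G (max z 1) := hconst 1 (max z 1) one_pos (le_max_right _ _)
  have h3 : G z = G 1 := h1.trans h2.symm
  simp only [hG] at h3
  rw [h3]
  norm_num [Real.log_one]

/-- Value of `∫_1^2 log Γ` via the Legendre duplication formula. -/
lemma integral_one_two : (∫ t in (1:ℝ)..2, Real.log (Real.Gamma t)) =
    (1/2) * Real.log (2 * Real.pi) - 1 := by
  have hshiftInt : IntervalIntegrable (fun s : ℝ => Real.log (Real.Gamma (s + 1/2)))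
      volume 1 (3/2) := by
    have h := (intInt_logGamma (show (0:ℝ) < 3/2 by norm_num) two_pos).comp_add_right (1/2)
    norm_num at h
    exact h
  have hint1 : IntervalIntegrable (fun s : ℝ => Real.log (Real.Gamma (2*s)))
      volume 1 (3/2) := by
    have h := (intInt_logGamma two_pos (show (0:ℝ) < 3 by norm_num)).comp_mul_left (c := 2)
    norm_num at h
    exact h
  have hint2 : IntervalIntegrable (fun s : ℝ => (1 - 2*s) * Real.log 2 + (1/2) * Real.log π)
      volume 1 (3/2) := Continuous.intervalIntegrable (by continuity) _ _
  have hshift : (∫ s in (1:ℝ)..(3/2:ℝ), Real.log (Real.Gamma (s + 1/2))) =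
      ∫ t in (3/2:ℝ)..2, Real.log (Real.Gamma t) := by
    rw [intervalIntegral.integral_comp_add_right (fun t => Real.log (Real.Gamma t)) (1/2)]
    norm_num
  have hsplit : (∫ t in (1:ℝ)..2, Real.log (Real.Gamma t)) =
      ∫ s in (1:ℝ)..(3/2:ℝ),
        (Real.log (Real.Gamma s) + Real.log (Real.Gamma (s + 1/2))) := by
    rw [intervalIntegral.integral_add (intInt_logGamma one_pos (by norm_num)) hshiftInt, hshift,
      intervalIntegral.integral_add_adjacent_intervals
      (intInt_logGamma one_pos (by norm_num)) (intInt_logGamma (by norm_num) (by norm_num))]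
  have hdup : ∀ s ∈ Set.uIcc (1:ℝ) (3/2:ℝ),
      Real.log (Real.Gamma s) + Real.log (Real.Gamma (s + 1/2)) =
      Real.log (Real.Gamma (2 * s)) + ((1 - 2*s) * Real.log 2 + (1/2) * Real.log π) := by
    intro s hs
    have hs1 : (1:ℝ) ≤ s := by
      rw [Set.uIcc_of_le (by norm_num : (1:ℝ) ≤ 3/2)] at hs
      exact hs.1
    have hs0 : 0 < s := by linarith
    have h1 : Real.Gamma s * Real.Gamma (s + 1/2) =
        Real.Gamma (2*s) * (2:ℝ) ^ (1 - 2*s) * Real.sqrt π := Real.Gamma_mul_Gamma_add_half s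
    have hg1 : 0 < Real.Gamma s := Real.Gamma_pos_of_pos hs0
    have hg2 : 0 < Real.Gamma (s + 1/2) := Real.Gamma_pos_of_pos (by linarith)
    have hg3 : 0 < Real.Gamma (2*s) := Real.Gamma_pos_of_pos (by linarith)
    have h2 := congrArg Real.log h1
    rw [Real.log_mul hg1.ne' hg2.ne',
      Real.log_mul (by positivity) (Real.sqrt_pos.2 Real.pi_pos).ne',
      Real.log_mul hg3.ne' (by positivity),
      Real.log_rpow two_pos, Real.log_sqrt Real.pi_pos.le] at h2
    linarith
  have e1 : (∫ s in (1:ℝ)..(3/2:ℝ), Real.log (Real.Gamma (2*s))) =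
      (1/2) * ∫ t in (2:ℝ)..3, Real.log (Real.Gamma t) := by
    rw [intervalIntegral.integral_comp_mul_left (fun t => Real.log (Real.Gamma t))
      (two_ne_zero)]
    norm_num
  have e2 : (∫ s in (1:ℝ)..(3/2:ℝ), ((1 - 2*s) * Real.log 2 + (1/2) * Real.log π)) =
      (-(3/4)) * Real.log 2 + (1/4) * Real.log π := by
    have hA : ∀ s ∈ Set.uIcc (1:ℝ) (3/2:ℝ), HasDerivAt
        (fun s : ℝ => (s - s^2) * Real.log 2 + (s/2) * Real.log π)
        ((1 - 2*s) * Real.log 2 + (1/2) * Real.log π) s := by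
      intro s _
      have h1 : HasDerivAt (fun s : ℝ => (s - s^2) * Real.log 2) ((1 - 2*s) * Real.log 2) s := by
        have := ((hasDerivAt_id s).fun_sub (hasDerivAt_pow 2 s)).mul_const (Real.log 2)
        refine this.congr_deriv ?_
        push_cast; ring
      have h2 : HasDerivAt (fun s : ℝ => (s/2) * Real.log π) ((1/2) * Real.log π) s := by
        simpa using ((hasDerivAt_id s).div_const 2).mul_const (Real.log π)
      exact h1.add h2
    rw [intervalIntegral.integral_eq_sub_of_hasDerivAt hA hint2]
    ring
  have key : (∫ t in (1:ℝ)..2, Real.log (Real.Gamma t)) =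
      (1/2) * (∫ t in (2:ℝ)..3, Real.log (Real.Gamma t)) +
      (-(3/4)) * Real.log 2 + (1/4) * Real.log π := by
    rw [hsplit, intervalIntegral.integral_congr hdup,
      intervalIntegral.integral_add hint1 hint2, e1, e2]
    ring
  have h2 := F_eq_const (z := 2) two_pos
  norm_num at h2
  rw [Real.log_mul two_ne_zero Real.pi_pos.ne']
  linarith

theorem integral_logGamma_and_binetMu (z : ℝ) (hz : 0 < z) :
    (∫ t in z..(z + 1), Real.log (Real.Gamma t)) =
      z * Real.log z - z + (1/2) * Real.log (2 * Real.pi) ∧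
    (∫ t in z..(z + 1), binetMu t) =
      (1/2) * (z * (z + 1) * Real.log (z / (z + 1)) + z + 1/2) := by
  have hpart1 : (∫ t in z..(z + 1), Real.log (Real.Gamma t)) =
      z * Real.log z - z + (1/2) * Real.log (2 * Real.pi) := by
    have := F_eq_const hz
    rw [integral_one_two] at this
    linarith
  refine ⟨hpart1, ?_⟩
  -- second part
  have hz1 : (0:ℝ) < z + 1 := by linarith
  -- ∫ (t - 1/2) * log t
  have hA : ∀ t ∈ Set.uIcc z (z+1), HasDerivAt
      (fun t : ℝ => ((t^2 - t)/2) * Real.log t - t^2/4 + t/2)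
      ((t - 1/2) * Real.log t) t := by
    intro t ht
    have ht0 : 0 < t := by
      have := ht.1
      rw [Set.uIcc_of_le (by linarith : z ≤ z + 1)] at ht
      linarith [ht.1]
    have h1 : HasDerivAt (fun t : ℝ => (t^2 - t)/2) ((2*t - 1)/2) t := by
      have := ((hasDerivAt_pow 2 t).fun_sub (hasDerivAt_id t)).div_const 2
      refine this.congr_deriv ?_; push_cast; ring
    have h2 := h1.fun_mul (Real.hasDerivAt_log ht0.ne')
    have h3 := (hasDerivAt_pow 2 t).div_const 4
    have h4 := (hasDerivAt_id t).div_const 2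
    have := (h2.fun_sub h3).fun_add h4
    refine this.congr_deriv ?_
    field_simp
    ring
  have hcontA : IntervalIntegrable (fun t : ℝ => (t - 1/2) * Real.log t) volume z (z+1) := by
    apply ContinuousOn.intervalIntegrable
    intro x hx
    have hx0 : 0 < x := by
      rw [Set.uIcc_of_le (by linarith : z ≤ z + 1)] at hx
      linarith [hx.1]
    exact (((continuousAt_id).sub continuousAt_const).mul
      (Real.continuousAt_log hx0.ne')).continuousWithinAt
  have hintA : (∫ t in z..(z+1), (t - 1/2) * Real.log t) =
      (((z+1)^2 - (z+1))/2) * Real.log (z+1) - (z+1)^2/4 + (z+1)/2 -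
      (((z^2 - z)/2) * Real.log z - z^2/4 + z/2) :=
    intervalIntegral.integral_eq_sub_of_hasDerivAt hA hcontA
  have hB : ∀ t ∈ Set.uIcc z (z+1), HasDerivAt
      (fun t : ℝ => t^2/2 - (1/2) * Real.log (2*π) * t)
      (t - (1/2) * Real.log (2*π)) t := by
    intro t _
    have h1 := (hasDerivAt_pow 2 t).div_const 2
    have h2 := (hasDerivAt_id t).const_mul ((1/2) * Real.log (2*π))
    have := h1.fun_sub h2
    refine this.congr_deriv ?_
    push_cast; ring
  have hintB : (∫ t in z..(z+1), (t - (1/2) * Real.log (2*π))) =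
      ((z+1)^2/2 - (1/2) * Real.log (2*π) * (z+1)) - (z^2/2 - (1/2) * Real.log (2*π) * z) :=
    intervalIntegral.integral_eq_sub_of_hasDerivAt hB
      (Continuous.intervalIntegrable (by continuity) _ _)
  -- split binetMu integral
  have hsplit : (∫ t in z..(z+1), binetMu t) =
      (∫ t in z..(z+1), Real.log (Real.Gamma t)) -
      (∫ t in z..(z+1), (t - 1/2) * Real.log t) +
      (∫ t in z..(z+1), (t - (1/2) * Real.log (2*π))) := by
    rw [← intervalIntegral.integral_sub (intInt_logGamma hz hz1) hcontA,
        ← intervalIntegral.integral_add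
          ((intInt_logGamma hz hz1).sub hcontA)
          (Continuous.intervalIntegrable (by continuity) _ _)]
    apply intervalIntegral.integral_congr
    intro t _
    simp only [binetMu]
    ring
  rw [hsplit, hpart1, hintA, hintB,
    Real.log_div hz.ne' hz1.ne']
  ring
end

section
/- For |x| < 1, the function x/log(1+x) has the convergent Taylor series x/log(1+x) = ∑_{m=0}^∞ (∑_{k=0}^m S_m^{(k)}/(k+1)) · x^m/m!, where S_m^{(k)} are the Stirling numbers of the first kind (with S_0^{(0)} = 1). -/
/-- Signed Stirling numbers of the first kind, defined by
`∏_{i=0}^{m−1}(x − i) = ∑_{k=0}^m S_m^{(k)} x^k`. -/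
noncomputable def stirlingFirst (m k : ℕ) : ℝ :=
  (∏ i ∈ Finset.range m, (Polynomial.X - Polynomial.C (i : ℝ))).coeff k

open Polynomial Finset

open Polynomial Finset

lemma stirlingFirst_zero (k : ℕ) : stirlingFirst 0 k = if k = 0 then 1 else 0 := by
  simp [stirlingFirst, Polynomial.coeff_one]

lemma stirlingFirst_succ (m k : ℕ) :
    stirlingFirst (m + 1) (k + 1) = stirlingFirst m k - stirlingFirst m (k + 1) * m := by
  rw [stirlingFirst, Finset.prod_range_succ, Polynomial.coeff_mul_X_sub_C]; rfl

lemma stirlingFirst_succ_zero (m : ℕ) :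
    stirlingFirst (m + 1) 0 = 0 := by
  simp [stirlingFirst, Polynomial.coeff_zero_eq_eval_zero, Finset.prod_range_succ',
    Polynomial.eval_prod]

lemma stirlingFirst_eq_zero_of_lt {m k : ℕ} (h : m < k) : stirlingFirst m k = 0 := by
  apply Polynomial.coeff_eq_zero_of_natDegree_lt
  calc (∏ i ∈ Finset.range m, (X - C (i : ℝ))).natDegree
      ≤ ∑ i ∈ Finset.range m, (X - C (i : ℝ)).natDegree := Polynomial.natDegree_prod_le _ _
    _ ≤ ∑ i ∈ Finset.range m, 1 := by
        exact Finset.sum_le_sum fun i _ => le_of_eq (Polynomial.natDegree_X_sub_C _)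
    _ = m := by simp
    _ < k := h

lemma abs_stirlingFirst_le (m k : ℕ) : |stirlingFirst m k| ≤ (m.factorial : ℝ) := by
  induction m generalizing k with
  | zero => rw [stirlingFirst_zero]; split <;> simp
  | succ m ih =>
    cases k with
    | zero => rw [stirlingFirst_succ_zero]; simp
    | succ k =>
      rw [stirlingFirst_succ]
      calc |stirlingFirst m k - stirlingFirst m (k + 1) * m|
          ≤ |stirlingFirst m k| + |stirlingFirst m (k + 1) * m| := abs_sub _ _
        _ ≤ (m.factorial : ℝ) + (m.factorial : ℝ) * m := by
            rw [abs_mul, Nat.abs_cast]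
            exact add_le_add (ih k) (mul_le_mul_of_nonneg_right (ih (k+1)) (by positivity))
        _ = ((m+1).factorial : ℝ) := by
            rw [Nat.factorial_succ]; push_cast; ring

noncomputable def gS (k n : ℕ) (y : ℝ) : ℝ := stirlingFirst n k * y ^ n / n.factorial

noncomputable def gS' (k n : ℕ) (y : ℝ) : ℝ :=
  stirlingFirst n k * (n * y ^ (n - 1)) / n.factorial

lemma summable_gS (k : ℕ) {y : ℝ} (hy : |y| < 1) : Summable (gS k · y) := by
  refine Summable.of_norm_bounded (summable_geometric_of_lt_one (abs_nonneg y) hy) ?_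
  intro n
  have h1 : (0:ℝ) < n.factorial := by exact_mod_cast n.factorial_pos
  calc ‖gS k n y‖ = |stirlingFirst n k| * |y| ^ n / n.factorial := by
        rw [gS, Real.norm_eq_abs, abs_div, abs_mul, abs_pow, Nat.abs_cast]
    _ ≤ (n.factorial : ℝ) * |y| ^ n / n.factorial := by
        gcongr
        exact abs_stirlingFirst_le n k
    _ = |y| ^ n := by field_simp

lemma hasDerivAt_gS (k n : ℕ) (y : ℝ) : HasDerivAt (gS k n) (gS' k n y) y :=
  ((hasDerivAt_pow n y).const_mul _).div_const _

lemma gS'_bound {r : ℝ} (hr : 1/2 ≤ r) (k n : ℕ) {y : ℝ} (hy : |y| ≤ r) :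
    ‖gS' k n y‖ ≤ 2 * n * r ^ n := by
  have hr0 : (0:ℝ) < r := lt_of_lt_of_le (by norm_num) hr
  have h1 : (0:ℝ) < n.factorial := by exact_mod_cast n.factorial_pos
  have habs : ‖gS' k n y‖ = |stirlingFirst n k| * (n * |y| ^ (n-1)) / n.factorial := by
    rw [gS', Real.norm_eq_abs, abs_div, abs_mul, abs_mul, abs_pow, Nat.abs_cast, Nat.abs_cast]
  cases n with
  | zero => simp [habs]
  | succ n =>
    rw [habs]
    have hyr : |y| ^ n ≤ r ^ n := pow_le_pow_left₀ (abs_nonneg y) hy n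
    push_cast
    calc |stirlingFirst (n+1) k| * (((n:ℝ)+1) * |y| ^ (n+1-1)) / (n+1).factorial
        ≤ ((n+1).factorial : ℝ) * (((n:ℝ)+1) * r ^ n) / (n+1).factorial := by
          gcongr
          · exact abs_stirlingFirst_le _ _
          · exact hyr
      _ = ((n:ℝ)+1) * r ^ n := by field_simp
      _ ≤ ((n:ℝ)+1) * (2 * r * r ^ n) := by
          gcongr
          nlinarith [pow_pos hr0 n]
      _ = 2 * ((n:ℝ)+1) * r ^ (n+1) := by ring
lemma summable_gS' {r : ℝ} (hr : 1/2 ≤ r) (hr1 : r < 1) (k : ℕ) {y : ℝ} (hy : |y| ≤ r) :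
    Summable (gS' k · y) := by
  have hrn : ‖r‖ < 1 := by
    rw [Real.norm_eq_abs, abs_of_pos (lt_of_lt_of_le (by norm_num) hr)]; exact hr1
  have hu : Summable (fun n : ℕ => 2 * n * r ^ n) := by
    have := (summable_pow_mul_geometric_of_norm_lt_one 1 hrn).mul_left 2
    simpa [mul_assoc] using this
  exact Summable.of_norm_bounded hu fun n => gS'_bound hr k n hy

lemma gS'_succ (c n : ℕ) (y : ℝ) :
    gS' c (n+1) y = stirlingFirst (n+1) c * y ^ n / (n.factorial : ℝ) := by
  rw [gS', Nat.add_sub_cancel, Nat.factorial_succ]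
  have h1 : ((n:ℝ)+1) ≠ 0 := by positivity
  have h2 : (n.factorial : ℝ) ≠ 0 := by positivity
  push_cast
  field_simp

lemma hasSum_stirling (k : ℕ) : ∀ x : ℝ, |x| < 1 →
    HasSum (fun m : ℕ => stirlingFirst m k * x ^ m / (m.factorial : ℝ))
      ((Real.log (1 + x)) ^ k / (k.factorial : ℝ)) := by
  induction k with
  | zero =>
    intro x _
    have h0 : ∀ m : ℕ, m ≠ 0 → stirlingFirst m 0 * x ^ m / (m.factorial : ℝ) = 0 := by
      intro m hm
      obtain ⟨n, rfl⟩ := Nat.exists_eq_succ_of_ne_zero hm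
      simp [stirlingFirst_succ_zero]
    have h := hasSum_single
      (f := fun m : ℕ => stirlingFirst m 0 * x ^ m / (m.factorial : ℝ)) 0 h0
    simpa [stirlingFirst_zero] using h
  | succ k ih =>
    intro x hx
    set r : ℝ := (1 + |x|) / 2 with hrdef
    have hxr : |x| < r := by rw [hrdef]; linarith
    have hr1 : r < 1 := by rw [hrdef]; linarith
    have hrhalf : 1/2 ≤ r := by rw [hrdef]; linarith [abs_nonneg x]
    have hr0 : (0:ℝ) < r := lt_of_lt_of_le (by norm_num) hrhalf
    -- derivative of the sum
    have hball : ∀ y : ℝ, y ∈ Metric.ball (0:ℝ) r → |y| < r := by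
      intro y hy; rwa [Metric.mem_ball, dist_zero_right, Real.norm_eq_abs] at hy
    have hu : Summable (fun n : ℕ => 2 * n * r ^ n) := by
      have hrn : ‖r‖ < 1 := by rw [Real.norm_eq_abs, abs_of_pos hr0]; exact hr1
      have := (summable_pow_mul_geometric_of_norm_lt_one 1 hrn).mul_left 2
      simpa [mul_assoc] using this
    have hsum0 : Summable (fun n => gS (k+1) n 0) :=
      summable_gS (k+1) (by norm_num)
    have hkey : ∀ y ∈ Metric.ball (0:ℝ) r,
        HasDerivAt (fun z => ∑' n, gS (k+1) n z) (∑' n, gS' (k+1) n y) y := by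
      intro y hy
      exact hasDerivAt_tsum_of_isPreconnected hu Metric.isOpen_ball
        (convex_ball (0:ℝ) r).isPreconnected
        (fun n z _ => hasDerivAt_gS (k+1) n z)
        (fun n z hz => gS'_bound hrhalf (k+1) n (le_of_lt (hball z hz)))
        (Metric.mem_ball_self hr0) hsum0 hy
    -- identify the derivative
    have hD : ∀ y ∈ Metric.ball (0:ℝ) r,
        (∑' n, gS' (k+1) n y) = (Real.log (1+y)) ^ k / (k.factorial : ℝ) / (1+y) := by
      intro y hy
      have hy1 : |y| < 1 := lt_trans (hball y hy) hr1
      have h1y : (0:ℝ) < 1 + y := by linarith [(abs_lt.mp hy1).1]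
      have hsg' : Summable (gS' (k+1) · y) := summable_gS' hrhalf hr1 (k+1) (hball y hy).le
      have hDsum : HasSum (gS' (k+1) · y) (∑' n, gS' (k+1) n y) := hsg'.hasSum
      set D := ∑' n, gS' (k+1) n y with hDdef
      have h00 : gS' (k+1) 0 y = 0 := by simp [gS']
      have hshift : HasSum (fun n => gS' (k+1) (n+1) y) D := by
        refine (hasSum_nat_add_iff (f := fun n => gS' (k+1) n y) 1).mpr ?_
        simpa [h00] using hDsum
      have hid : ∀ n : ℕ, gS' (k+1) (n+1) y
          = stirlingFirst n k * y ^ n / (n.factorial : ℝ) - y * gS' (k+1) n y := by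
        intro n
        have hyy : y * ((n:ℝ) * y ^ (n-1)) = (n:ℝ) * y ^ n := by
          cases n with
          | zero => simp
          | succ n => rw [Nat.add_sub_cancel, pow_succ]; ring
        rw [gS'_succ, stirlingFirst_succ, gS']
        have hnf : (n.factorial : ℝ) ≠ 0 := by positivity
        field_simp
        linear_combination stirlingFirst n (k+1) * hyy
      have hIH := ih y hy1
      have h2 : HasSum (fun n => y * gS' (k+1) n y) (y * D) := hDsum.mul_left y
      have h3 : HasSum (fun n => gS' (k+1) (n+1) y)
          ((Real.log (1+y)) ^ k / (k.factorial : ℝ) - y * D) := by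
        have := hIH.sub h2
        simpa [hid] using this
      have hEq : D = (Real.log (1+y)) ^ k / (k.factorial : ℝ) - y * D :=
        hshift.unique h3
      rw [eq_div_iff (ne_of_gt h1y)]
      linear_combination hEq
    -- the function F = (sum) - log^(k+1)/(k+1)! has zero derivative on the ball
    set F : ℝ → ℝ := fun z =>
      (∑' n, gS (k+1) n z) - Real.log (1+z) ^ (k+1) / (((k+1).factorial : ℕ) : ℝ) with hFdef
    have hHderiv : ∀ y ∈ Metric.ball (0:ℝ) r,
        HasDerivAt (fun z => Real.log (1+z) ^ (k+1) / (((k+1).factorial : ℕ) : ℝ))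
          ((Real.log (1+y)) ^ k / (k.factorial : ℝ) / (1+y)) y := by
      intro y hy
      have hy1 : |y| < 1 := lt_trans (hball y hy) hr1
      have h1y : (0:ℝ) < 1 + y := by linarith [(abs_lt.mp hy1).1]
      have hadd : HasDerivAt (fun z : ℝ => 1 + z) 1 y := by
        simpa using (hasDerivAt_id y).const_add (1:ℝ)
      have hlog : HasDerivAt (fun z => Real.log (1+z)) (1/(1+y)) y := by
        exact ((Real.hasDerivAt_log (ne_of_gt h1y)).comp y hadd).congr_deriv (by simp)
      have h2 := (hlog.pow (k+1)).div_const (((k+1).factorial : ℕ) : ℝ)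
      refine h2.congr_deriv ?_
      rw [Nat.add_sub_cancel, Nat.factorial_succ]
      have hkf : (k.factorial : ℝ) ≠ 0 := by positivity
      have h1y' : (1:ℝ) + y ≠ 0 := ne_of_gt h1y
      push_cast
      field_simp
    have hFderiv : ∀ y ∈ Metric.ball (0:ℝ) r, HasDerivAt F 0 y := by
      intro y hy
      have h := ((hkey y hy).congr_deriv (hD y hy)).sub (hHderiv y hy)
      exact h.congr_deriv (sub_self _)
    -- F is constant on [min 0 x, max 0 x]
    have hsubset : Set.Icc (min 0 x) (max 0 x) ⊆ Metric.ball (0:ℝ) r := by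
      intro y hy
      rw [Metric.mem_ball, dist_zero_right, Real.norm_eq_abs]
      have h1 := hy.1; have h2 := hy.2
      have hmin : -|x| ≤ min 0 x := le_min (by simp [abs_nonneg, neg_nonpos]) (neg_abs_le x)
      have hmax : max 0 x ≤ |x| := max_le (abs_nonneg x) (le_abs_self x)
      rw [abs_lt]; constructor <;> nlinarith
    have hconst := constant_of_has_deriv_right_zero
      (f := F) (a := min 0 x) (b := max 0 x)
      (fun y hy => ((hFderiv y (hsubset hy)).continuousAt).continuousWithinAt)
      (fun y hy => (hFderiv y (hsubset (Set.Ico_subset_Icc_self hy))).hasDerivWithinAt)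
    have hx_mem : x ∈ Set.Icc (min 0 x) (max 0 x) := ⟨min_le_right _ _, le_max_right _ _⟩
    have h0_mem : (0:ℝ) ∈ Set.Icc (min 0 x) (max 0 x) := ⟨min_le_left _ _, le_max_left _ _⟩
    have hF0 : F 0 = 0 := by
      have hG0 : (∑' n, gS (k+1) n 0) = 0 := by
        rw [tsum_eq_single 0 (fun n hn => by simp [gS, zero_pow hn])]
        simp [gS, stirlingFirst_zero]
      simp [hFdef, hG0]
    have hFx : F x = 0 := by
      rw [hconst x hx_mem, ← hconst 0 h0_mem, hF0]
    have hGx : (∑' n, gS (k+1) n x)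
        = Real.log (1+x) ^ (k+1) / (((k+1).factorial : ℕ) : ℝ) := by
      have := sub_eq_zero.mp (by simpa [hFdef] using hFx)
      exact this
    have hsum := (summable_gS (k+1) hx).hasSum
    rw [hGx] at hsum
    exact hsum

lemma hasSum_exp_aux (x : ℝ) (hx : |x| < 1) :
    HasSum (fun k : ℕ => (Real.log (1+x)) ^ k / (((k+1).factorial : ℕ) : ℝ))
      (if x = 0 then 1 else x / Real.log (1 + x)) := by
  have h1x : (0:ℝ) < 1 + x := by linarith [(abs_lt.mp hx).1]
  by_cases hx0 : x = 0
  · subst hx0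
    simp only [if_pos rfl, add_zero, Real.log_one]
    have h := hasSum_single (f := fun k : ℕ => (0:ℝ) ^ k / (((k+1).factorial : ℕ) : ℝ)) 0
      (fun k hk => by simp [zero_pow hk])
    simpa using h
  · rw [if_neg hx0]
    set L := Real.log (1+x) with hL
    have hLne : L ≠ 0 := by
      rw [hL]
      intro h
      rcases (Real.log_eq_zero).mp h with h' | h' | h' <;> [linarith; exact hx0 (by linarith); linarith]
    have hexp : HasSum (fun n : ℕ => L ^ n / (n.factorial : ℝ)) (1 + x) := by
      have h := NormedSpace.expSeries_div_hasSum_exp L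
      rw [← Real.exp_eq_exp_ℝ] at h
      rwa [hL, Real.exp_log h1x] at h
    have hshift : HasSum (fun n : ℕ => L ^ (n+1) / ((n+1).factorial : ℝ)) x := by
      refine (hasSum_nat_add_iff (f := fun n : ℕ => L ^ n / (n.factorial : ℝ)) 1).mpr ?_
      simpa [add_comm] using hexp
    have hdiv := hshift.mul_right L⁻¹
    have heq : ∀ n : ℕ, L ^ (n+1) / ((n+1).factorial : ℝ) * L⁻¹
        = L ^ n / (((n+1).factorial : ℕ) : ℝ) := by
      intro n
      rw [pow_succ]
      field_simp
    rw [funext heq] at hdiv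
    rwa [div_eq_mul_inv]

theorem taylor_x_div_log (x : ℝ) (hx : |x| < 1) :
    HasSum
      (fun m : ℕ =>
        (∑ k ∈ Finset.range (m + 1), stirlingFirst m k / ((k : ℝ) + 1)) *
          x ^ m / (m.factorial : ℝ))
      (if x = 0 then 1 else x / Real.log (1 + x)) := by
  set F : ℕ × ℕ → ℝ := fun p => stirlingFirst p.1 p.2 / ((p.2 : ℝ) + 1) * x ^ p.1 / (p.1.factorial : ℝ)
    with hFdef
  have hFzero : ∀ m k : ℕ, m < k → F (m, k) = 0 := by
    intro m k h; simp [hFdef, stirlingFirst_eq_zero_of_lt h]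
  have hFbound : ∀ m k : ℕ, |F (m, k)| ≤ |x| ^ m := by
    intro m k
    have h1 : (0:ℝ) < m.factorial := by exact_mod_cast m.factorial_pos
    have h2 : (1:ℝ) ≤ (k:ℝ) + 1 := by
      have := Nat.cast_nonneg (α := ℝ) k; linarith
    calc |F (m, k)| = |stirlingFirst m k| / ((k:ℝ)+1) * |x| ^ m / (m.factorial : ℝ) := by
          rw [hFdef]; rw [abs_div, abs_mul, abs_div, abs_pow, Nat.abs_cast,
            abs_of_pos (by positivity : (0:ℝ) < (k:ℝ)+1)]
      _ ≤ (m.factorial : ℝ) / 1 * |x| ^ m / (m.factorial : ℝ) := by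
          gcongr
          exact abs_stirlingFirst_le m k
      _ = |x| ^ m := by field_simp
  -- summability of |F|
  have hsummAbs : Summable (fun p => |F p|) := by
    rw [summable_prod_of_nonneg (fun p => abs_nonneg (F p))]
    constructor
    · intro m
      exact summable_of_ne_finset_zero (s := Finset.range (m+1))
        (fun k hk => by rw [hFzero m k (by simpa using hk)]; simp)
    · have hbig : Summable (fun m : ℕ => ((m:ℝ)+1) * |x| ^ m) := by
        have h1 : ‖|x|‖ < 1 := by rwa [Real.norm_eq_abs, abs_abs]
        have h2 := summable_pow_mul_geometric_of_norm_lt_one 1 h1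
        have h3 := summable_geometric_of_lt_one (abs_nonneg x) hx
        simpa [add_mul] using h2.add h3
      refine Summable.of_nonneg_of_le (fun m => tsum_nonneg fun k => abs_nonneg _) ?_ hbig
      intro m
      rw [tsum_eq_sum (s := Finset.range (m+1))
        (fun k hk => by rw [hFzero m k (by simpa using hk)]; simp)]
      calc ∑ k ∈ Finset.range (m+1), |F (m, k)|
          ≤ ∑ k ∈ Finset.range (m+1), |x| ^ m := Finset.sum_le_sum fun k _ => hFbound m k
        _ = ((m:ℝ)+1) * |x| ^ m := by
            rw [Finset.sum_const, Finset.card_range]; push_cast; ring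
  have hsummF : Summable F := by
    rw [← summable_abs_iff]; exact hsummAbs
  have hFsum : HasSum F (∑' p, F p) := hsummF.hasSum
  -- fiberwise over m : gives the goal function
  have hfib_m : ∀ m : ℕ, HasSum (fun k => F (m, k))
      ((∑ k ∈ Finset.range (m + 1), stirlingFirst m k / ((k : ℝ) + 1)) *
          x ^ m / (m.factorial : ℝ)) := by
    intro m
    have h := hasSum_sum_of_ne_finset_zero (s := Finset.range (m+1))
      (f := fun k => F (m, k)) (L := SummationFilter.unconditional ℕ) (fun k hk => hFzero m k (by simpa using hk))
    have heq : ∑ k ∈ Finset.range (m+1), F (m, k)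
        = (∑ k ∈ Finset.range (m + 1), stirlingFirst m k / ((k : ℝ) + 1)) *
          x ^ m / (m.factorial : ℝ) := by
      simp [hFdef, Finset.sum_mul, Finset.sum_div]
    rwa [heq] at h
  have hmain : HasSum (fun m : ℕ =>
      (∑ k ∈ Finset.range (m + 1), stirlingFirst m k / ((k : ℝ) + 1)) *
          x ^ m / (m.factorial : ℝ)) (∑' p, F p) :=
    hFsum.prod_fiberwise hfib_m
  -- fiberwise over k : identifies the sum
  have hFsum2 : HasSum (fun p : ℕ × ℕ => F (p.2, p.1)) (∑' p, F p) := by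
    have := ((Equiv.prodComm ℕ ℕ).hasSum_iff (f := F) (a := ∑' p, F p)).mpr hFsum
    exact this
  have hfib_k : ∀ k : ℕ, HasSum (fun m => F (m, k))
      ((Real.log (1+x)) ^ k / (((k+1).factorial : ℕ) : ℝ)) := by
    intro k
    have h := (hasSum_stirling k x hx).div_const ((k:ℝ)+1)
    have heqf : ∀ m : ℕ, stirlingFirst m k * x ^ m / (m.factorial : ℝ) / ((k:ℝ)+1)
        = F (m, k) := by
      intro m; rw [hFdef]; ring
    have heqv : (Real.log (1+x)) ^ k / (k.factorial : ℝ) / ((k:ℝ)+1)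
        = (Real.log (1+x)) ^ k / (((k+1).factorial : ℕ) : ℝ) := by
      rw [Nat.factorial_succ]
      push_cast
      rw [div_div]
      ring_nf
    rw [funext heqf, heqv] at h
    exact h
  have hexpsum : HasSum (fun k : ℕ => (Real.log (1+x)) ^ k / (((k+1).factorial : ℕ) : ℝ))
      (∑' p, F p) := hFsum2.prod_fiberwise hfib_k
  have hT : (∑' p, F p) = (if x = 0 then 1 else x / Real.log (1 + x)) :=
    hexpsum.unique (hasSum_exp_aux x hx)
  rwa [hT] at hmain
end
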